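/- Let n ∈ ℕ, let m > 0 be a real number, let μ be a probability vector on {0,…,n−1}, and let Γ = (Γ_1, …, Γ_b) be a partition of {0,…,n−1}. Let T_0, …, T_{n−1} be mutually independent random variables with T_i ∼ Poisson(m·μ_i), and for each j ∈ {1,…,b} set X_j = Σ_{i ∈ Γ_j} T_i. Define Y = (1/m²)·Σ_{j=1}^b X_j·(X_j − 1). Then Var(Y) = (2/m²)·Σ_{j=1}^b μ[Γ_j]² + (4/m)·Σ_{j=1}^b μ[Γ_j]³, where μ[Γ_j] = Σ_{i ∈ Γ_j} μ_i. -/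

import Mathlib

open scoped BigOperators
open MeasureTheory ProbabilityTheory

namespace PoisAux

noncomputable def pp (l : ℝ) (k : ℕ) : ℝ := Real.exp (-l) * l ^ k / (Nat.factorial k)

lemma pp_nonneg' {l : ℝ} (hl : 0 ≤ l) (k : ℕ) : 0 ≤ pp l k := by unfold pp; positivity

lemma hasSum_pp (l : ℝ) : HasSum (pp l) 1 := by
  have h := (NormedSpace.expSeries_div_hasSum_exp l).mul_left (Real.exp (-l))
  rw [← Real.exp_eq_exp_ℝ, ← Real.exp_add, neg_add_cancel, Real.exp_zero] at h
  have he : pp l = fun k => Real.exp (-l) * (l ^ k / (Nat.factorial k)) := by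
    funext k; unfold pp; ring
  rw [he]; exact h

lemma hasSum_descFactorial_pp (l : ℝ) (r : ℕ) :
    HasSum (fun k => (Nat.descFactorial k r : ℝ) * pp l k) (l ^ r) := by
  have key : ∀ j : ℕ, (Nat.descFactorial (j + r) r : ℝ) * pp l (j + r) = l ^ r * pp l j := by
    intro j
    have h1 : (Nat.factorial j : ℝ) * (Nat.descFactorial (j + r) r : ℝ)
        = (Nat.factorial (j + r) : ℝ) := by
      exact_mod_cast congrArg (Nat.cast : ℕ → ℝ)
        (by simpa using Nat.factorial_mul_descFactorial (Nat.le_add_left r j))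
    have hj : (Nat.factorial j : ℝ) ≠ 0 := Nat.cast_ne_zero.2 (Nat.factorial_ne_zero j)
    have hjr : (Nat.factorial (j + r) : ℝ) ≠ 0 := Nat.cast_ne_zero.2 (Nat.factorial_ne_zero _)
    unfold pp
    rw [pow_add]
    field_simp
    linear_combination (l ^ j * l ^ r) * h1
  have h := (hasSum_pp l).mul_left (l ^ r)
  rw [mul_one] at h
  have h2 : HasSum (fun j => (Nat.descFactorial (j + r) r : ℝ) * pp l (j + r)) (l ^ r) := by
    have hfe := (funext key : (fun j => (Nat.descFactorial (j + r) r : ℝ) * pp l (j + r))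
        = fun j => l ^ r * pp l j)
    rw [hfe]; exact h
  rw [hasSum_nat_add_iff (f := fun k => (Nat.descFactorial k r : ℝ) * pp l k) r] at h2
  have hz : ∑ i ∈ Finset.range r, (Nat.descFactorial i r : ℝ) * pp l i = 0 := by
    refine Finset.sum_eq_zero fun i hi => ?_
    rw [Nat.descFactorial_of_lt (Finset.mem_range.1 hi)]
    simp
  rw [hz, add_zero] at h2
  exact h2

variable {Ω : Type*} [MeasurableSpace Ω] {P : Measure Ω}

def IsPois (P : Measure Ω) (Z : Ω → ℕ) (l : ℝ) : Prop :=
  ∀ k, P {ω | Z ω = k} = ENNReal.ofReal (pp l k)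

lemma integral_comp_nat {X : Ω → ℕ} (hX : Measurable X) {p : ℕ → ℝ}
    (hp : ∀ k, 0 ≤ p k) (hlaw : ∀ k, P {ω | X ω = k} = ENNReal.ofReal (p k))
    {f : ℕ → ℝ} (hf : ∀ k, 0 ≤ f k) {S : ℝ} (hsum : HasSum (fun k => f k * p k) S) :
    Integrable (fun ω => f (X ω)) P ∧ ∫ ω, f (X ω) ∂P = S := by
  have hfm : Measurable f := measurable_from_top
  have hS : 0 ≤ S := by
    rw [← hsum.tsum_eq]
    exact tsum_nonneg fun k => mul_nonneg (hf k) (hp k)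
  have hmap : ∀ k : ℕ, (P.map X) {k} = ENNReal.ofReal (p k) := by
    intro k
    rw [Measure.map_apply hX (measurableSet_singleton k)]
    have hpre : X ⁻¹' {k} = {ω | X ω = k} := by ext ω; simp
    rw [hpre, hlaw]
  have hlint : ∫⁻ ω, ENNReal.ofReal (f (X ω)) ∂P = ENNReal.ofReal S := by
    rw [← lintegral_map (f := fun k => ENNReal.ofReal (f k)) (g := X)
        (by exact hfm.ennreal_ofReal) hX, lintegral_countable']
    have h1 : ∀ k : ℕ, ENNReal.ofReal (f k) * (P.map X) {k} = ENNReal.ofReal (f k * p k) := by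
      intro k; rw [hmap, ← ENNReal.ofReal_mul (hf k)]
    rw [tsum_congr h1, ← ENNReal.ofReal_tsum_of_nonneg
        (fun k => mul_nonneg (hf k) (hp k)) hsum.summable, hsum.tsum_eq]
  have hint : Integrable (fun ω => f (X ω)) P := by
    refine ⟨(hfm.comp hX).aestronglyMeasurable, ?_⟩
    rw [hasFiniteIntegral_iff_norm]
    have hnn : ∀ ω, ENNReal.ofReal ‖f (X ω)‖ = ENNReal.ofReal (f (X ω)) := by
      intro ω; rw [Real.norm_of_nonneg (hf _)]
    simp only [hnn, hlint]
    exact ENNReal.ofReal_lt_top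
  refine ⟨hint, ?_⟩
  rw [integral_eq_lintegral_of_nonneg_ae (Filter.Eventually.of_forall fun ω => hf _)
    hint.aestronglyMeasurable, hlint, ENNReal.toReal_ofReal hS]

lemma pp_conv (a b : ℝ) (k : ℕ) :
    ∑ i ∈ Finset.range (k + 1), pp a i * pp b (k - i) = pp (a + b) k := by
  unfold pp
  rw [neg_add, Real.exp_add, add_pow, Finset.mul_sum, Finset.sum_div]
  refine Finset.sum_congr rfl fun i hi => ?_
  have hik : i ≤ k := Nat.lt_succ_iff.1 (Finset.mem_range.1 hi)
  have hkey : (Nat.choose k i : ℝ) * (Nat.factorial i : ℝ) * (Nat.factorial (k - i) : ℝ)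
      = (Nat.factorial k : ℝ) := by
    exact_mod_cast congrArg (Nat.cast : ℕ → ℝ) (Nat.choose_mul_factorial_mul_factorial hik)
  have h1 : (Nat.factorial i : ℝ) ≠ 0 := Nat.cast_ne_zero.2 (Nat.factorial_ne_zero _)
  have h2 : (Nat.factorial (k - i) : ℝ) ≠ 0 := Nat.cast_ne_zero.2 (Nat.factorial_ne_zero _)
  have h3 : (Nat.factorial k : ℝ) ≠ 0 := Nat.cast_ne_zero.2 (Nat.factorial_ne_zero _)
  field_simp
  linear_combination (-(a ^ i * b ^ (k - i))) * hkey

lemma IsPois.add {Z W : Ω → ℕ} (hZ : Measurable Z) (hW : Measurable W)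
    (hind : IndepFun Z W P) {a b : ℝ} (ha : 0 ≤ a) (hb : 0 ≤ b)
    (hZa : IsPois P Z a) (hWb : IsPois P W b) :
    IsPois P (fun ω => Z ω + W ω) (a + b) := by
  intro k
  have hset : {ω | Z ω + W ω = k}
      = ⋃ i ∈ Finset.range (k + 1), ({ω | Z ω = i} ∩ {ω | W ω = k - i}) := by
    ext ω
    simp only [Set.mem_setOf_eq, Set.mem_iUnion, Set.mem_inter_iff, Finset.mem_range,
      exists_prop]
    constructor
    · intro h; exact ⟨Z ω, by omega, rfl, by omega⟩
    · rintro ⟨i, hi, h1, h2⟩; omega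
  have hms : ∀ i : ℕ, MeasurableSet ({ω | Z ω = i} ∩ {ω | W ω = k - i}) :=
    fun i => (hZ (measurableSet_singleton i)).inter (hW (measurableSet_singleton (k - i)))
  have hdisj : (↑(Finset.range (k + 1)) : Set ℕ).PairwiseDisjoint
      (fun i => {ω | Z ω = i} ∩ {ω | W ω = k - i}) := by
    intro i _ j _ hij
    refine Set.disjoint_left.2 fun ω hωi hωj => hij ?_
    rw [← hωi.1, ← hωj.1]
  rw [hset, measure_biUnion_finset hdisj fun i _ => hms i]
  have hterm : ∀ i : ℕ, P ({ω | Z ω = i} ∩ {ω | W ω = k - i})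
      = ENNReal.ofReal (pp a i * pp b (k - i)) := by
    intro i
    have hmul := hind.measure_inter_preimage_eq_mul {i} {k - i}
      (measurableSet_singleton i) (measurableSet_singleton (k - i))
    have hZp : Z ⁻¹' {i} = {ω | Z ω = i} := by ext ω; simp
    have hWp : W ⁻¹' {k - i} = {ω | W ω = k - i} := by ext ω; simp
    rw [hZp, hWp] at hmul
    rw [hmul, hZa i, hWb (k - i), ← ENNReal.ofReal_mul (by unfold pp; positivity)]
  rw [Finset.sum_congr rfl fun i _ => hterm i,
    ← ENNReal.ofReal_sum_of_nonneg (fun i _ => by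
      have ha' : 0 ≤ pp a i := by unfold pp; positivity
      have hb' : 0 ≤ pp b (k - i) := by unfold pp; positivity
      positivity),
    pp_conv]

lemma isPois_finset_sum [IsProbabilityMeasure P] {ι : Type*} {T : ι → Ω → ℕ}
    (hmeas : ∀ i, Measurable (T i))
    (hindep : iIndepFun T P) {lam : ι → ℝ} (hlam : ∀ i, 0 ≤ lam i)
    (hpois : ∀ i, IsPois P (T i) (lam i)) (s : Finset ι) :
    IsPois P (fun ω => ∑ i ∈ s, T i ω) (∑ i ∈ s, lam i) := by
  classical
  induction s using Finset.induction_on with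
  | empty =>
    intro k
    cases k with
    | zero => simp [pp, Real.exp_zero]
    | succ k =>
      have h0 : {ω : Ω | (∑ i ∈ (∅ : Finset ι), T i ω) = k + 1} = ∅ := by
        ext ω; simp
      rw [h0]
      simp [pp]
  | insert a s hx ih =>
    have hsum_meas : Measurable (fun ω => ∑ i ∈ s, T i ω) :=
      Finset.measurable_sum _ fun i _ => hmeas i
    have hind : IndepFun (T a) (fun ω => ∑ i ∈ s, T i ω) P := by
      have h := hindep.indepFun_finset_sum_of_notMem hmeas hx
      have he : (∑ j ∈ s, T j) = fun ω => ∑ i ∈ s, T i ω := by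
        funext ω; simp [Finset.sum_apply]
      rw [he] at h
      exact h.symm
    have h := IsPois.add (hmeas a) hsum_meas hind (hlam a)
      (Finset.sum_nonneg fun i _ => hlam i) (hpois a) ih
    have he1 : (fun ω => T a ω + ∑ i ∈ s, T i ω) = fun ω => ∑ i ∈ insert a s, T i ω := by
      funext ω; rw [Finset.sum_insert hx]
    have he2 : lam a + ∑ i ∈ s, lam i = ∑ i ∈ insert a s, lam i := (Finset.sum_insert hx).symm
    rw [he1, he2] at h
    exact h

lemma cast_descFactorial (x r : ℕ) :
    ((Nat.descFactorial x r : ℕ) : ℝ) = ∏ t ∈ Finset.range r, ((x : ℝ) - t) := by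
  induction r with
  | zero => simp
  | succ r ih =>
    rw [Nat.descFactorial_succ, Finset.prod_range_succ, ← ih]
    push_cast
    rcases Nat.lt_or_ge x r with h | h
    · simp [Nat.descFactorial_of_lt h]
    · rw [Nat.cast_sub h]; ring

lemma cast_descFactorial_two (x : ℕ) :
    ((Nat.descFactorial x 2 : ℕ) : ℝ) = (x : ℝ) * ((x : ℝ) - 1) := by
  rw [cast_descFactorial]
  simp [Finset.prod_range_succ]

lemma cast_descFactorial_sq (x : ℕ) :
    ((x : ℝ) * ((x : ℝ) - 1)) ^ 2 = ((Nat.descFactorial x 4 : ℕ) : ℝ)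
      + 4 * ((Nat.descFactorial x 3 : ℕ) : ℝ) + 2 * ((Nat.descFactorial x 2 : ℕ) : ℝ) := by
  rw [cast_descFactorial, cast_descFactorial, cast_descFactorial]
  simp [Finset.prod_range_succ]
  ring

lemma pois_variance [IsProbabilityMeasure P] {X : Ω → ℕ} (hX : Measurable X) {l : ℝ} (hl : 0 ≤ l)
    (hpois : IsPois P X l) :
    MemLp (fun ω => (X ω : ℝ) * ((X ω : ℝ) - 1)) 2 P ∧
      variance (fun ω => (X ω : ℝ) * ((X ω : ℝ) - 1)) P = 4 * l ^ 3 + 2 * l ^ 2 := by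
  have H : ∀ r : ℕ, Integrable (fun ω => ((Nat.descFactorial (X ω) r : ℕ) : ℝ)) P ∧
      ∫ ω, ((Nat.descFactorial (X ω) r : ℕ) : ℝ) ∂P = l ^ r := fun r =>
    integral_comp_nat hX (pp_nonneg' hl) hpois (fun k => by positivity)
      (hasSum_descFactorial_pp l r)
  set g : Ω → ℝ := fun ω => (X ω : ℝ) * ((X ω : ℝ) - 1) with hg
  have hg2 : g = fun ω => ((Nat.descFactorial (X ω) 2 : ℕ) : ℝ) := by
    funext ω; rw [hg]; exact (cast_descFactorial_two (X ω)).symm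
  have hgint : Integrable g P := by rw [hg2]; exact (H 2).1
  have hgival : ∫ ω, g ω ∂P = l ^ 2 := by rw [hg2]; exact (H 2).2
  have hsq : (fun ω => g ω ^ 2) = fun ω => ((Nat.descFactorial (X ω) 4 : ℕ) : ℝ)
      + 4 * ((Nat.descFactorial (X ω) 3 : ℕ) : ℝ)
      + 2 * ((Nat.descFactorial (X ω) 2 : ℕ) : ℝ) := by
    funext ω; rw [hg]; exact cast_descFactorial_sq (X ω)
  have hsqint : Integrable (fun ω => g ω ^ 2) P := by
    rw [hsq]
    exact ((H 4).1.add ((H 3).1.const_mul 4)).add ((H 2).1.const_mul 2)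
  have hsqival : ∫ ω, g ω ^ 2 ∂P = l ^ 4 + 4 * l ^ 3 + 2 * l ^ 2 := by
    rw [hsq, integral_add, integral_add, integral_const_mul, integral_const_mul,
      (H 4).2, (H 3).2, (H 2).2]
    · exact (H 4).1
    · exact (H 3).1.const_mul 4
    · exact (H 4).1.add ((H 3).1.const_mul 4)
    · exact (H 2).1.const_mul 2
  have hmem : MemLp g 2 P :=
    (memLp_two_iff_integrable_sq hgint.aestronglyMeasurable).2 hsqint
  refine ⟨hmem, ?_⟩
  rw [variance_eq_sub hmem]
  have h1 : P[g ^ 2] = l ^ 4 + 4 * l ^ 3 + 2 * l ^ 2 := by rw [← hsqival]; rfl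
  have h2 : P[g] = l ^ 2 := hgival
  rw [h1, h2]
  ring

end PoisAux

/-- Let `μ` be a probability vector on `{0,…,n−1}`, let
`Γ = (Γ_1,…,Γ_b)` be a partition of `{0,…,n−1}`, let `T_0,…,T_{n−1}` be mutually
independent with `T_i ∼ Poisson(m·μ_i)`, set `X_j = Σ_{i∈Γ_j} T_i` and
`Y = (1/m²)·Σ_j X_j(X_j−1)`.  Then
`Var(Y) = (2/m²)·Σ_j μ[Γ_j]² + (4/m)·Σ_j μ[Γ_j]³`. -/
theorem variance_second_component_fixed_clustering
    {Ω : Type*} [MeasurableSpace Ω] (P : Measure Ω) [IsProbabilityMeasure P]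
    (n b : ℕ) (m : ℝ) (hm : 0 < m)
    (μ : Fin n → ℝ) (hμ0 : ∀ i, 0 ≤ μ i) (hμ1 : ∑ i, μ i = 1)
    (Γ : Fin b → Finset (Fin n))
    (hdisj : ∀ j₁ j₂, j₁ ≠ j₂ → Disjoint (Γ j₁) (Γ j₂))
    (hcover : ∀ i : Fin n, ∃ j, i ∈ Γ j)
    (T : Fin n → Ω → ℕ) (hmeas : ∀ i, Measurable (T i))
    (hindep : iIndepFun T P)
    (hpois : ∀ i k, P {ω | T i ω = k} =
      ENNReal.ofReal (Real.exp (-(m * μ i)) * (m * μ i) ^ k / (Nat.factorial k))) :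
    variance
        (fun ω => (1 / m ^ 2) * ∑ j : Fin b,
          (∑ i ∈ Γ j, (T i ω : ℝ)) * ((∑ i ∈ Γ j, (T i ω : ℝ)) - 1)) P
      = (2 / m ^ 2) * (∑ j : Fin b, (∑ i ∈ Γ j, μ i) ^ 2)
          + (4 / m) * ∑ j : Fin b, (∑ i ∈ Γ j, μ i) ^ 3 := by
  classical
  set s : Fin b → ℝ := fun j => ∑ i ∈ Γ j, μ i with hs
  have hs0 : ∀ j, 0 ≤ s j := fun j => Finset.sum_nonneg fun i _ => hμ0 i
  set N : Fin b → Ω → ℕ := fun j ω => ∑ i ∈ Γ j, T i ω with hN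
  have hNmeas : ∀ j, Measurable (N j) := fun j => Finset.measurable_sum _ fun i _ => hmeas i
  have hTpois : ∀ i, PoisAux.IsPois P (T i) (m * μ i) := fun i k => hpois i k
  have hNpois : ∀ j, PoisAux.IsPois P (N j) (m * s j) := by
    intro j
    have h := PoisAux.isPois_finset_sum hmeas hindep (lam := fun i => m * μ i)
      (fun i => mul_nonneg hm.le (hμ0 i)) hTpois (Γ j)
    rwa [← Finset.mul_sum] at h
  set g : Fin b → Ω → ℝ := fun j ω => (N j ω : ℝ) * ((N j ω : ℝ) - 1) with hgdef
  have hgvar : ∀ j, MemLp (g j) 2 P ∧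
      variance (g j) P = 4 * (m * s j) ^ 3 + 2 * (m * s j) ^ 2 :=
    fun j => PoisAux.pois_variance (hNmeas j) (mul_nonneg hm.le (hs0 j)) (hNpois j)
  have hgind : ∀ j₁ j₂ : Fin b, j₁ ≠ j₂ → IndepFun (g j₁) (g j₂) P := by
    intro j₁ j₂ hne
    have h := hindep.indepFun_finset (Γ j₁) (Γ j₂) (hdisj _ _ hne) hmeas
    set φ : ℕ → ℝ := fun x => (x : ℝ) * ((x : ℝ) - 1) with hφ
    have hφm : Measurable φ := measurable_from_top
    have hsm : ∀ S : Finset (Fin n), Measurable (fun v : (i : S) → ℕ => φ (∑ i, v i)) :=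
      fun S => hφm.comp (Finset.measurable_sum _ fun i _ => measurable_pi_apply i)
    have hcomp := h.comp (hsm (Γ j₁)) (hsm (Γ j₂))
    have he : ∀ j : Fin b,
        ((fun v : (i : Γ j) → ℕ => φ (∑ i, v i)) ∘ (fun a (i : Γ j) => T i a)) = g j := by
      intro j
      funext a
      show φ (∑ i : (Γ j : Finset (Fin n)), T i a) = g j a
      rw [Finset.sum_coe_sort (Γ j) (fun i => T i a)]
    rw [he j₁, he j₂] at hcomp
    exact hcomp
  have hY : (fun ω => (1 / m ^ 2) * ∑ j : Fin b,
        (∑ i ∈ Γ j, (T i ω : ℝ)) * ((∑ i ∈ Γ j, (T i ω : ℝ)) - 1))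
      = fun ω => (1 / m ^ 2) * (∑ j : Fin b, g j) ω := by
    funext ω
    simp only [Finset.sum_apply]
    congr 1
    refine Finset.sum_congr rfl fun j _ => ?_
    show _ = (N j ω : ℝ) * ((N j ω : ℝ) - 1)
    rw [hN]
    push_cast
    ring
  rw [hY, variance_const_mul,
    IndepFun.variance_sum (fun j _ => (hgvar j).1)
      (fun j₁ _ j₂ _ hne => hgind j₁ j₂ hne),
    Finset.sum_congr rfl fun j (_ : j ∈ Finset.univ) => (hgvar j).2]
  have hterm : ∀ j, 4 * (m * s j) ^ 3 + 2 * (m * s j) ^ 2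
      = (4 * m ^ 3) * s j ^ 3 + (2 * m ^ 2) * s j ^ 2 := fun j => by ring
  rw [Finset.sum_congr rfl fun j _ => hterm j, Finset.sum_add_distrib,
    ← Finset.mul_sum, ← Finset.mul_sum]
  have hm2 : m ≠ 0 := hm.ne'
  field_simp
  ring
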